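/- Let l ∈ (0, 1/4), r = 1 − 2l, and let M be as defined. Then for every probability measure ν on ℝ³ such that the pushforwards of ν under the three coordinate projections all equal Lebesgue measure on [0,1] and such that ν is concentrated on M (ν(M) = 1), the integral ∫ x·y·z dν(x,y,z) equals 3·∫₀^l t(1−2t)² dt + l·r²·(r − l). In particular, this integral is the same for all such measures ν. -/

import Mathlib

open Set MeasureTheory

/-- The set `M ⊆ [0,1]³`: the union of the three segments
`Mx = {(t, 1−2t, 1−2t) : 0 ≤ t ≤ l}`, `My = {(1−2t, t, 1−2t) : 0 ≤ t ≤ l}`,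
`Mz = {(1−2t, 1−2t, t) : 0 ≤ t ≤ l}` and the two-dimensional piece
`M₂ = {(x,y,z) : l ≤ x,y,z ≤ 1−2l, xyz = l(1−2l)²}`. -/
def Mset (l : ℝ) : Set (ℝ × ℝ × ℝ) :=
  {p | ∃ t, 0 ≤ t ∧ t ≤ l ∧
    (p = (t, 1 - 2*t, 1 - 2*t) ∨ p = (1 - 2*t, t, 1 - 2*t) ∨ p = (1 - 2*t, 1 - 2*t, t))} ∪
  {p | l ≤ p.1 ∧ p.1 ≤ 1 - 2*l ∧ l ≤ p.2.1 ∧ p.2.1 ≤ 1 - 2*l ∧ l ≤ p.2.2 ∧ p.2.2 ≤ 1 - 2*l ∧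
    p.1 * p.2.1 * p.2.2 = l * (1 - 2*l)^2}

/-- The auxiliary single-variable function expressing `xyz` through `x` on `M`. -/
noncomputable def Ffun (l : ℝ) : ℝ → ℝ := fun x =>
  if x ≤ l then x * (1 - 2*x)^2
  else if x ≤ 1 - 2*l then l * (1 - 2*l)^2
  else ((1 - x)/2) * x^2

lemma Ffun_left {l x : ℝ} (hx : x ≤ l) : Ffun l x = x * (1 - 2*x)^2 := if_pos hx

lemma Ffun_mid {l x : ℝ} (hl : 3*l < 1) (h1 : l ≤ x) (h2 : x ≤ 1 - 2*l) :
    Ffun l x = l * (1 - 2*l)^2 := by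
  by_cases h : x ≤ l
  · have : x = l := le_antisymm h h1
    subst this
    rw [Ffun_left le_rfl]
  · rw [Ffun, if_neg h, if_pos h2]

lemma Ffun_right {l x : ℝ} (hl : 3*l < 1) (hx : 1 - 2*l ≤ x) :
    Ffun l x = ((1 - x)/2) * x^2 := by
  have hxl : ¬ x ≤ l := by push_neg; linarith
  by_cases h : x ≤ 1 - 2*l
  · have hxe : x = 1 - 2*l := le_antisymm h hx
    rw [Ffun, if_neg hxl, if_pos h, hxe]
    ring
  · rw [Ffun, if_neg hxl, if_neg h]

lemma Ffun_cont {l : ℝ} (hl0 : 0 < l) (hl4 : l < 1/4) : Continuous (Ffun l) := by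
  have hlr : l ≤ 1 - 2*l := by linarith
  have hinner : Continuous (fun x : ℝ => if x ≤ 1 - 2*l then l * (1 - 2*l)^2 else ((1 - x)/2) * x^2) := by
    apply Continuous.if_le continuous_const (by fun_prop) continuous_id continuous_const
    intro x hx
    simp only [id] at hx
    subst hx; ring
  apply Continuous.if_le (by fun_prop) hinner continuous_id continuous_const
  intro x hx
  simp only [id] at hx
  subst hx
  rw [if_pos hlr]

lemma Mset_closed (l : ℝ) : IsClosed (Mset l) := by
  unfold Mset
  apply IsClosed.union
  · have heq : {p : ℝ × ℝ × ℝ | ∃ t, 0 ≤ t ∧ t ≤ l ∧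
        (p = (t, 1 - 2*t, 1 - 2*t) ∨ p = (1 - 2*t, t, 1 - 2*t) ∨ p = (1 - 2*t, 1 - 2*t, t))} =
        ((fun t : ℝ => (t, 1 - 2*t, 1 - 2*t)) '' Icc 0 l) ∪
        ((fun t : ℝ => (1 - 2*t, t, 1 - 2*t)) '' Icc 0 l) ∪
        ((fun t : ℝ => (1 - 2*t, 1 - 2*t, t)) '' Icc 0 l) := by
      ext p
      simp only [mem_setOf_eq, mem_union, mem_image, mem_Icc]
      constructor
      · rintro ⟨t, h0, h1, (h | h | h)⟩
        · exact Or.inl (Or.inl ⟨t, ⟨h0, h1⟩, h.symm⟩)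
        · exact Or.inl (Or.inr ⟨t, ⟨h0, h1⟩, h.symm⟩)
        · exact Or.inr ⟨t, ⟨h0, h1⟩, h.symm⟩
      · rintro ((⟨t, ⟨h0, h1⟩, h⟩ | ⟨t, ⟨h0, h1⟩, h⟩) | ⟨t, ⟨h0, h1⟩, h⟩)
        · exact ⟨t, h0, h1, Or.inl h.symm⟩
        · exact ⟨t, h0, h1, Or.inr (Or.inl h.symm)⟩
        · exact ⟨t, h0, h1, Or.inr (Or.inr h.symm)⟩
    rw [heq]
    exact (((isCompact_Icc.image (by fun_prop)).union
      (isCompact_Icc.image (by fun_prop))).union (isCompact_Icc.image (by fun_prop))).isClosed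
  · simp only [setOf_and]
    refine IsClosed.inter (isClosed_le continuous_const (by fun_prop))
      (IsClosed.inter (isClosed_le (by fun_prop) continuous_const)
      (IsClosed.inter (isClosed_le continuous_const (by fun_prop))
      (IsClosed.inter (isClosed_le (by fun_prop) continuous_const)
      (IsClosed.inter (isClosed_le continuous_const (by fun_prop))
      (IsClosed.inter (isClosed_le (by fun_prop) continuous_const)
      (isClosed_eq (by fun_prop) continuous_const))))))

/-- The integral `∫ xyz dν` is the same for every `(3,1)`-stochastic measure `ν`
concentrated on the set `M`; it equals `3·∫₀^l t(1−2t)² dt + l·r²·(r − l)`. -/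
theorem integral_eq_of_stochastic_on_M (l : ℝ) (hl : l ∈ Set.Ioo (0 : ℝ) (1/4))
    (ν : Measure (ℝ × ℝ × ℝ)) [IsProbabilityMeasure ν]
    (h1 : ν.map (fun p => p.1) = volume.restrict (Set.Icc (0 : ℝ) 1))
    (h2 : ν.map (fun p => p.2.1) = volume.restrict (Set.Icc (0 : ℝ) 1))
    (h3 : ν.map (fun p => p.2.2) = volume.restrict (Set.Icc (0 : ℝ) 1))
    (hM : ν (Mset l) = 1) :
    ∫ p, p.1 * p.2.1 * p.2.2 ∂ν =
      3 * (∫ t in (0 : ℝ)..l, t * (1 - 2*t)^2) + l * (1 - 2*l)^2 * ((1 - 2*l) - l) := by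
  obtain ⟨hl0, hl4⟩ := hl
  have hl3 : 3*l < 1 := by linarith
  have hlr : l ≤ 1 - 2*l := by linarith
  have hr1 : 1 - 2*l ≤ 1 := by linarith
  -- xyz equals Ffun l x on M
  have hMeq : ∀ p ∈ Mset l, p.1 * p.2.1 * p.2.2 = Ffun l p.1 := by
    intro p hp
    rcases hp with hp | hp
    · obtain ⟨t, ht0, htl, (h | h | h)⟩ := hp
      · subst h
        simp only
        rw [Ffun_left htl]; ring
      · subst h
        simp only
        rw [Ffun_right hl3 (by linarith)]; ring
      · subst h
        simp only
        rw [Ffun_right hl3 (by linarith)]; ring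
    · obtain ⟨hx1, hx2, _, _, _, _, hxyz⟩ := hp
      rw [Ffun_mid hl3 hx1 hx2]; exact hxyz
  have hMmeas : MeasurableSet (Mset l) := (Mset_closed l).measurableSet
  have hnull : ν (Mset l)ᶜ = 0 := by
    rw [measure_compl hMmeas (measure_ne_top ν _), hM, measure_univ, tsub_self]
  have hmem : Mset l ∈ ae ν := by rw [mem_ae_iff]; exact hnull
  have hae : (fun p : ℝ × ℝ × ℝ => p.1 * p.2.1 * p.2.2) =ᵐ[ν] (fun p => Ffun l p.1) :=
    Filter.eventuallyEq_of_mem hmem hMeq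
  rw [integral_congr_ae hae]
  have hFcont : Continuous (Ffun l) := Ffun_cont hl0 hl4
  have hmap : ∫ p : ℝ × ℝ × ℝ, Ffun l p.1 ∂ν = ∫ x, Ffun l x ∂(ν.map (fun p : ℝ × ℝ × ℝ => p.1)) :=
    (integral_map measurable_fst.aemeasurable hFcont.measurable.aestronglyMeasurable).symm
  rw [hmap, h1, MeasureTheory.integral_Icc_eq_integral_Ioc,
    ← intervalIntegral.integral_of_le (zero_le_one)]
  -- split the interval integral
  have hi1 : IntervalIntegrable (Ffun l) volume 0 l := hFcont.intervalIntegrable _ _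
  have hi2 : IntervalIntegrable (Ffun l) volume l (1 - 2*l) := hFcont.intervalIntegrable _ _
  have hi3 : IntervalIntegrable (Ffun l) volume (1 - 2*l) 1 := hFcont.intervalIntegrable _ _
  rw [← intervalIntegral.integral_add_adjacent_intervals (hi1) (hi2.trans hi3),
    ← intervalIntegral.integral_add_adjacent_intervals hi2 hi3]
  have e1 : ∫ x in (0:ℝ)..l, Ffun l x = ∫ t in (0:ℝ)..l, t * (1 - 2*t)^2 := by
    apply intervalIntegral.integral_congr
    intro x hx
    rw [uIcc_of_le (le_of_lt hl0)] at hx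
    exact Ffun_left hx.2
  have e2 : ∫ x in l..(1 - 2*l), Ffun l x = l * (1 - 2*l)^2 * ((1 - 2*l) - l) := by
    rw [show (∫ x in l..(1 - 2*l), Ffun l x) = ∫ _ in l..(1 - 2*l), l * (1 - 2*l)^2 by
      apply intervalIntegral.integral_congr
      intro x hx
      rw [uIcc_of_le hlr] at hx
      exact Ffun_mid hl3 hx.1 hx.2]
    rw [intervalIntegral.integral_const, smul_eq_mul]
    ring
  have e3 : ∫ x in (1 - 2*l)..1, Ffun l x = ∫ x in (1 - 2*l)..1, ((1 - x)/2) * x^2 := by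
    apply intervalIntegral.integral_congr
    intro x hx
    rw [uIcc_of_le hr1] at hx
    exact Ffun_right hl3 hx.1
  rw [e1, e2, e3]
  -- compute the two polynomial integrals
  have p1 : ∫ t in (0:ℝ)..l, t * (1 - 2*t)^2 = l^2/2 - 4*l^3/3 + l^4 := by
    have hd : ∀ x ∈ uIcc (0:ℝ) l, HasDerivAt (fun x : ℝ => x^2/2 - 4*x^3/3 + x^4)
        (x * (1 - 2*x)^2) x := by
      intro x _
      have h := (((hasDerivAt_pow 2 x).div_const 2).sub
        (((hasDerivAt_pow 3 x).const_mul (4:ℝ)).div_const 3)).add (hasDerivAt_pow 4 x)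
      refine h.congr_deriv ?_
      push_cast
      ring
    rw [intervalIntegral.integral_eq_sub_of_hasDerivAt hd
      ((Continuous.intervalIntegrable (by fun_prop) _ _))]
    norm_num
  have p2 : ∫ x in (1 - 2*l)..1, ((1 - x)/2) * x^2 =
      (1/6 - 1/8) - ((1 - 2*l)^3/6 - (1 - 2*l)^4/8) := by
    have hd : ∀ x ∈ uIcc (1 - 2*l) (1:ℝ), HasDerivAt (fun x : ℝ => x^3/6 - x^4/8)
        (((1 - x)/2) * x^2) x := by
      intro x _
      have h := ((hasDerivAt_pow 3 x).div_const 6).sub ((hasDerivAt_pow 4 x).div_const 8)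
      refine h.congr_deriv ?_
      push_cast
      ring
    rw [intervalIntegral.integral_eq_sub_of_hasDerivAt hd
      ((Continuous.intervalIntegrable (by fun_prop) _ _))]
    norm_num
  rw [p1, p2]
  ring
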